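/- Let n and k be integers with k ≥ 3 and n ≥ 4k−2, and let B be a Steiner system S(k−1, k, n): a family of k-element subsets (blocks) of {1,...,n} such that every (k−1)-element subset of {1,...,n} is contained in exactly one block. Then B is a resolving set for the Kneser graph K(n,k), and consequently β(K(n,k)) ≤ C(n,k−1)/k, where C(n,k−1) denotes the binomial coefficient. -/

import Mathlib

/-- The Johnson graph `J(n,k)`: vertices are the `k`-element subsets of `{1,...,n}`,
two vertices adjacent iff their intersection has `k-1` elements. -/
def johnsonGraph (n k : ℕ) : SimpleGraph {s : Finset (Fin n) // s.card = k} where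
  Adj U W := U ≠ W ∧ (U.1 ∩ W.1).card = k - 1
  symm := by
    constructor
    intro U W h
    exact ⟨h.1.symm, by rw [Finset.inter_comm]; exact h.2⟩
  loopless := by
    constructor
    intro U h
    exact h.1 rfl

/-- The Kneser graph `K(n,k)`: vertices are the `k`-element subsets of `{1,...,n}`,
two vertices adjacent iff the corresponding subsets are disjoint. -/
def kneserGraph (n k : ℕ) : SimpleGraph {s : Finset (Fin n) // s.card = k} where
  Adj U W := U ≠ W ∧ Disjoint U.1 W.1
  symm := by
    constructor
    intro U W h
    exact ⟨h.1.symm, h.2.symm⟩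
  loopless := by
    constructor
    intro U h
    exact h.1 rfl

/-- A set `S` of vertices is a resolving set for `G` if every pair of distinct
vertices is resolved by some vertex of `S`, i.e. is at different distances from it. -/
def resolvingSet {V : Type*} (G : SimpleGraph V) (S : Set V) : Prop :=
  ∀ u v : V, u ≠ v → ∃ x ∈ S, G.dist u x ≠ G.dist v x

/-- The metric dimension `β(G)`: the minimum cardinality of a resolving set for `G`. -/
noncomputable def metricDim {V : Type*} (G : SimpleGraph V) : ℕ :=
  sInf {m | ∃ S : Finset V, resolvingSet G ↑S ∧ S.card = m}

/-- For `k ≥ 3` and `n ≥ 4k−2`, the blocks of a Steiner system `S(k−1,k,n)` form a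
resolving set for the Kneser graph `K(n,k)`; consequently `β(K(n,k)) ≤ C(n,k−1)/k`. -/
theorem steiner_system_resolving_kneser (n k : ℕ) (hk : 3 ≤ k) (hn : 4 * k - 2 ≤ n)
    (B : Finset (Finset (Fin n)))
    (hcard : ∀ b ∈ B, b.card = k)
    (hsteiner : ∀ T : Finset (Fin n), T.card = k - 1 → ∃! b, b ∈ B ∧ T ⊆ b) :
    resolvingSet (kneserGraph n k) {X | X.1 ∈ B} ∧
    metricDim (kneserGraph n k) ≤ Nat.choose n (k - 1) / k := by
  classical
  have hkpos : 0 < k := by omega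
  -- main resolving claim
  have hres : resolvingSet (kneserGraph n k) {X | X.1 ∈ B} := by
    intro u v huv
    obtain ⟨x, hxU, hxV⟩ : ∃ x ∈ u.1, x ∉ v.1 := by
      by_contra h
      push_neg at h
      exact huv (Subtype.ext (Finset.eq_of_subset_of_card_le h (by rw [u.2, v.2])))
    set Cc : Finset (Fin n) := Finset.univ \ (u.1 ∪ v.1) with hCcdef
    have hCuv : ∀ a ∈ Cc, a ∉ u.1 ∧ a ∉ v.1 := by
      intro a ha
      rw [hCcdef, Finset.mem_sdiff, Finset.mem_union] at ha
      exact ⟨fun h => ha.2 (Or.inl h), fun h => ha.2 (Or.inr h)⟩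
    have hCcard : 2 * k - 2 ≤ Cc.card := by
      have h1 : (u.1 ∪ v.1).card ≤ 2 * k := by
        calc (u.1 ∪ v.1).card ≤ u.1.card + v.1.card := Finset.card_union_le _ _
        _ = 2 * k := by rw [u.2, v.2]; ring
      have h2 : Cc.card = (Finset.univ : Finset (Fin n)).card - (u.1 ∪ v.1).card :=
        Finset.card_sdiff_of_subset (Finset.subset_univ _)
      have h3 : (Finset.univ : Finset (Fin n)).card = n := by simp
      omega
    obtain ⟨R, hRsub, hRcard⟩ := Finset.exists_subset_card_eq (s := Cc) (n := k - 3) (by omega)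
    have hxR : x ∉ R := fun h => (hCuv x (hRsub h)).1 hxU
    -- the T sets
    have hTcard : ∀ c ∈ Cc \ R, (insert x (insert c R)).card = k - 1 := by
      intro c hc
      rw [Finset.mem_sdiff] at hc
      have hcR : c ∉ R := hc.2
      have hxc : x ∉ insert c R := by
        rw [Finset.mem_insert]
        rintro (h | h)
        · exact (hCuv c hc.1).1 (h ▸ hxU)
        · exact hxR h
      rw [Finset.card_insert_of_notMem hxc, Finset.card_insert_of_notMem hcR, hRcard]
      omega
    set bb : Fin n → Finset (Fin n) := fun c =>
      if h : (insert x (insert c R)).card = k - 1 then (hsteiner _ h).choose else ∅ with hbbdef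
    have hbb : ∀ c ∈ Cc \ R, bb c ∈ B ∧ insert x (insert c R) ⊆ bb c := by
      intro c hc
      rw [hbbdef]
      simp only [dif_pos (hTcard c hc)]
      exact (hsteiner _ (hTcard c hc)).choose_spec.1
    have hbbuniq : ∀ c ∈ Cc \ R, ∀ b' , b' ∈ B → insert x (insert c R) ⊆ b' → b' = bb c := by
      intro c hc b' hb' hsub
      rw [hbbdef]
      simp only [dif_pos (hTcard c hc)]
      exact (hsteiner _ (hTcard c hc)).choose_spec.2 b' ⟨hb', hsub⟩
    -- find c with bb c disjoint from v.1
    have hkey : ∃ c ∈ Cc \ R, Disjoint (bb c) v.1 := by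
      by_contra hbad
      push_neg at hbad
      have hbad' : ∀ c ∈ Cc \ R, ∃ a, a ∈ bb c ∧ a ∈ v.1 := by
        intro c hc
        exact Finset.not_disjoint_iff.mp (hbad c hc)
      set f : Fin n → Fin n := fun c =>
        if hc : c ∈ Cc \ R then (hbad' c hc).choose else x with hfdef
      have hf : ∀ c ∈ Cc \ R, f c ∈ bb c ∧ f c ∈ v.1 := by
        intro c hc
        rw [hfdef]
        simp only [dif_pos hc]
        exact (hbad' c hc).choose_spec
      have hcardlt : v.1.card < (Cc \ R).card := by
        rw [v.2, Finset.card_sdiff_of_subset hRsub, hRcard]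
        omega
      obtain ⟨c, hc, c', hc', hne, hfeq⟩ :=
        Finset.exists_ne_map_eq_of_card_lt_of_maps_to hcardlt (fun c hc => (hf c hc).2)
      set y := f c with hydef
      have hyV : y ∈ v.1 := (hf c hc).2
      have hyc : y ∈ bb c := (hf c hc).1
      have hyc' : y ∈ bb c' := hfeq ▸ (hf c' hc').1
      -- the (k-1)-set insert x (insert y R) is in both blocks
      have hyR : y ∉ R := fun h => (hCuv y (hRsub h)).2 hyV
      have hxyR : x ∉ insert y R := by
        rw [Finset.mem_insert]
        rintro (h | h)
        · exact hxV (h ▸ hyV)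
        · exact hxR h
      have hT'card : (insert x (insert y R)).card = k - 1 := by
        rw [Finset.card_insert_of_notMem hxyR, Finset.card_insert_of_notMem hyR, hRcard]
        omega
      have hsubT' : ∀ c₀ ∈ Cc \ R, y ∈ bb c₀ → insert x (insert y R) ⊆ bb c₀ := by
        intro c₀ hc₀ hy₀
        have hs := (hbb c₀ hc₀).2
        intro a ha
        rw [Finset.mem_insert, Finset.mem_insert] at ha
        rcases ha with rfl | rfl | ha
        · exact hs (Finset.mem_insert_self _ _)
        · exact hy₀
        · exact hs (Finset.mem_insert_of_mem (Finset.mem_insert_of_mem ha))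
      have heqb : bb c' = bb c := by
        have h1 := (hsteiner _ hT'card).choose_spec.2 (bb c)
          ⟨(hbb c hc).1, hsubT' c hc hyc⟩
        have h2 := (hsteiner _ hT'card).choose_spec.2 (bb c')
          ⟨(hbb c' hc').1, hsubT' c' hc' hyc'⟩
        rw [h1, h2]
      -- now c' and y are both in bb c \ (insert x (insert c R)), which has card 1
      have hc'mem : c' ∈ bb c := heqb ▸ (hbb c' hc').2
        (Finset.mem_insert_of_mem (Finset.mem_insert_self _ _))
      have hcC : c ∈ Cc := (Finset.mem_sdiff.mp hc).1
      have hc'C : c' ∈ Cc := (Finset.mem_sdiff.mp hc').1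
      have hc'R : c' ∉ R := (Finset.mem_sdiff.mp hc').2
      have hc'T : c' ∉ insert x (insert c R) := by
        rw [Finset.mem_insert, Finset.mem_insert]
        rintro (h | h | h)
        · exact (hCuv c' hc'C).1 (h ▸ hxU)
        · exact hne h.symm
        · exact hc'R h
      have hyT : y ∉ insert x (insert c R) := by
        rw [Finset.mem_insert, Finset.mem_insert]
        rintro (h | h | h)
        · exact hxV (h ▸ hyV)
        · exact (hCuv c hcC).2 (h ▸ hyV)
        · exact hyR h
      have hbc_card : (bb c).card = k := hcard _ (hbb c hc).1
      have hsd : (bb c \ insert x (insert c R)).card = 1 := by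
        rw [Finset.card_sdiff_of_subset (hbb c hc).2, hbc_card, hTcard c hc]
        omega
      have hc'y : c' ≠ y := fun h => (hCuv c' hc'C).2 (h ▸ hyV)
      have hpair : ({c', y} : Finset (Fin n)) ⊆ bb c \ insert x (insert c R) := by
        intro a ha
        rw [Finset.mem_insert, Finset.mem_singleton] at ha
        rw [Finset.mem_sdiff]
        rcases ha with rfl | rfl
        · exact ⟨hc'mem, hc'T⟩
        · exact ⟨hyc, hyT⟩
      have := Finset.card_le_card hpair
      rw [Finset.card_pair hc'y, hsd] at this
      omega
    obtain ⟨c, hc, hdisj⟩ := hkey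
    have hbmem : bb c ∈ B := (hbb c hc).1
    have hbcard : (bb c).card = k := hcard _ hbmem
    refine ⟨⟨bb c, hbcard⟩, hbmem, ?_⟩
    have hxb : x ∈ bb c := (hbb c hc).2 (Finset.mem_insert_self _ _)
    have hdv : (kneserGraph n k).dist v ⟨bb c, hbcard⟩ = 1 := by
      rw [SimpleGraph.dist_eq_one_iff_adj]
      refine ⟨?_, hdisj.symm⟩
      intro h
      have hveq : v.1 = bb c := congrArg Subtype.val h
      rw [← hveq] at hdisj
      have hemp : v.1 = ∅ := disjoint_self.mp hdisj
      have hv2 := v.2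
      rw [hemp] at hv2
      simp at hv2
      omega
    have hdu : (kneserGraph n k).dist u ⟨bb c, hbcard⟩ ≠ 1 := by
      intro h1
      have hadj := SimpleGraph.dist_eq_one_iff_adj.mp h1
      exact (Finset.disjoint_left.mp hadj.2 hxU) hxb
    rw [hdv]
    exact hdu
  refine ⟨hres, ?_⟩
  -- counting: B.card * k = n.choose (k-1)
  set f : Finset (Fin n) → Finset (Fin n) := fun T =>
    if h : T.card = k - 1 then (hsteiner T h).choose else ∅ with hfdef
  have hfmem : ∀ T : Finset (Fin n), T.card = k - 1 → f T ∈ B ∧ T ⊆ f T := by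
    intro T hT
    rw [hfdef]; simp only [dif_pos hT]
    exact (hsteiner T hT).choose_spec.1
  have hfuniq : ∀ T : Finset (Fin n), T.card = k - 1 → ∀ b ∈ B, T ⊆ b → f T = b := by
    intro T hT b hb hsub
    rw [hfdef]; simp only [dif_pos hT]
    exact ((hsteiner T hT).choose_spec.2 b ⟨hb, hsub⟩).symm
  set P : Finset (Finset (Fin n)) := (Finset.univ : Finset (Fin n)).powersetCard (k - 1) with hPdef
  have hPmem : ∀ T, T ∈ P ↔ T.card = k - 1 := by
    intro T
    rw [hPdef, Finset.mem_powersetCard]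
    exact ⟨fun h => h.2, fun h => ⟨Finset.subset_univ _, h⟩⟩
  have hPcard : P.card = Nat.choose n (k - 1) := by
    rw [hPdef, Finset.card_powersetCard]
    congr 1
    simp
  have hsum : P.card = ∑ b ∈ B, (P.filter fun T => f T = b).card := by
    apply Finset.card_eq_sum_card_fiberwise
    intro T hT
    exact (hfmem T ((hPmem T).mp hT)).1
  have hfiber : ∀ b ∈ B, (P.filter fun T => f T = b) = b.powersetCard (k - 1) := by
    intro b hb
    ext T
    rw [Finset.mem_filter, hPmem, Finset.mem_powersetCard]
    constructor
    · rintro ⟨hT, hfT⟩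
      exact ⟨hfT ▸ (hfmem T hT).2, hT⟩
    · rintro ⟨hsub, hT⟩
      exact ⟨hT, hfuniq T hT b hb hsub⟩
  have hBk : Nat.choose n (k - 1) = B.card * k := by
    rw [← hPcard, hsum]
    rw [Finset.sum_congr rfl (fun b hb => by
      rw [hfiber b hb, Finset.card_powersetCard, hcard b hb])]
    rw [Finset.sum_const, smul_eq_mul]
    congr 1
    have h1 : k - (k - 1) = 1 := by omega
    rw [← Nat.choose_symm (by omega : k - 1 ≤ k), h1, Nat.choose_one_right]
  have hBcard : B.card = Nat.choose n (k - 1) / k := by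
    rw [hBk, Nat.mul_div_cancel _ hkpos]
  -- the finset of vertices
  set S : Finset {s : Finset (Fin n) // s.card = k} :=
    B.attach.map ⟨fun p => ⟨p.1, hcard p.1 p.2⟩, by
      intro a b h
      simp only [Subtype.mk.injEq] at h
      exact Subtype.ext h⟩ with hSdef
  have hScard : S.card = B.card := by rw [hSdef, Finset.card_map, Finset.card_attach]
  have hSres : resolvingSet (kneserGraph n k) ↑S := by
    intro a b hab
    obtain ⟨w, hwB, hw⟩ := hres a b hab
    refine ⟨w, ?_, hw⟩
    rw [Finset.mem_coe, hSdef, Finset.mem_map]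
    exact ⟨⟨w.1, hwB⟩, Finset.mem_attach _ _, Subtype.ext rfl⟩
  calc metricDim (kneserGraph n k) ≤ S.card := Nat.sInf_le ⟨S, hSres, rfl⟩
  _ = Nat.choose n (k - 1) / k := by rw [hScard, hBcard]
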